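/- Let H0 and H1 be complex Hilbert spaces, let A0 on H0 and A1 on H1 be bounded self-adjoint operators, let B : H1 → H0 be a bounded operator, and let L be the block operator matrix on H = H0 ⊕ H1 given by L(x0,x1) = (A0 x0 + B x1, −B* x0 + A1 x1) (so L is J-self-adjoint with respect to J(x0,x1) = (x0,−x1)). Suppose there exists a bounded operator K : H0 → H1 with ‖K‖ < 1 satisfying K A0 − A1 K + K B K = −B*. Then the spectrum of L is real (spectrum(L) ⊆ ℝ), and L is similar to a self-adjoint operator: there exist a bounded operator T on H with bounded inverse and a bounded self-adjoint operator Λ on H such that L = T ∘ Λ ∘ T⁻¹; moreover Λ can be chosen block diagonal, i.e. leaving the subspaces H0 ⊕ {0} and {0} ⊕ H1 invariant. (Bounded-operator version of Theorem 5.2 (i) of the paper.) -/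

import Mathlib

open ContinuousLinearMap

set_option linter.unusedSectionVars false
set_option maxHeartbeats 1000000
set_option synthInstance.maxHeartbeats 1000000

open scoped InnerProductSpace

namespace BlockThm

variable {H0 : Type*} [NormedAddCommGroup H0] [InnerProductSpace ℂ H0] [CompleteSpace H0]
variable {H1 : Type*} [NormedAddCommGroup H1] [InnerProductSpace ℂ H1] [CompleteSpace H1]

/-- block operator on the Hilbert direct sum -/
noncomputable def blk (P : H0 →L[ℂ] H0) (Q : H1 →L[ℂ] H0) (R : H0 →L[ℂ] H1) (S : H1 →L[ℂ] H1) :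
    WithLp 2 (H0 × H1) →L[ℂ] WithLp 2 (H0 × H1) :=
  (((WithLp.prodContinuousLinearEquiv 2 ℂ H0 H1).symm :
      (H0 × H1) →L[ℂ] WithLp 2 (H0 × H1)) ∘L
    ((P ∘L fst ℂ H0 H1 + Q ∘L snd ℂ H0 H1).prod
      (R ∘L fst ℂ H0 H1 + S ∘L snd ℂ H0 H1))) ∘L
    ((WithLp.prodContinuousLinearEquiv 2 ℂ H0 H1) : WithLp 2 (H0 × H1) →L[ℂ] (H0 × H1))

variable {P P' : H0 →L[ℂ] H0} {Q Q' : H1 →L[ℂ] H0} {R R' : H0 →L[ℂ] H1} {S S' : H1 →L[ℂ] H1}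

theorem blk_apply (x : WithLp 2 (H0 × H1)) :
    blk P Q R S x = (WithLp.equiv 2 (H0 × H1)).symm (P x.fst + Q x.snd, R x.fst + S x.snd) :=
  rfl

theorem blk_fst (x : WithLp 2 (H0 × H1)) : (blk P Q R S x).fst = P x.fst + Q x.snd := rfl
theorem blk_snd (x : WithLp 2 (H0 × H1)) : (blk P Q R S x).snd = R x.fst + S x.snd := rfl

theorem blk_comp :
    blk P Q R S ∘L blk P' Q' R' S' =
      blk (P ∘L P' + Q ∘L R') (P ∘L Q' + Q ∘L S') (R ∘L P' + S ∘L R') (R ∘L Q' + S ∘L S') := by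
  ext x
  rw [WithLp.ext_iff]; apply Prod.ext <;> simp [blk_fst, blk_snd, map_add] <;> abel

theorem blk_one : blk (1 : H0 →L[ℂ] H0) 0 0 (1 : H1 →L[ℂ] H1) = 1 := by
  ext x
  rw [WithLp.ext_iff]; apply Prod.ext <;> simp [blk_fst, blk_snd]

theorem blk_adjoint :
    adjoint (blk P Q R S) = blk (adjoint P) (adjoint R) (adjoint Q) (adjoint S) := by
  symm
  rw [eq_adjoint_iff]
  intro x y
  simp only [blk_apply, WithLp.prod_inner_apply, WithLp.equiv_symm_apply, WithLp.toLp_fst, WithLp.toLp_snd, WithLp.ofLp_fst, WithLp.ofLp_snd,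
    inner_add_left, inner_add_right, adjoint_inner_left]
  ring

theorem one_sub_blk_offdiag (Q : H1 →L[ℂ] H0) (R : H0 →L[ℂ] H1) :
    (1 : WithLp 2 (H0 × H1) →L[ℂ] WithLp 2 (H0 × H1)) - blk 0 Q R 0 = blk 1 (-Q) (-R) 1 := by
  ext x
  rw [WithLp.ext_iff]; apply Prod.ext <;> simp [blk_fst, blk_snd] <;> abel

theorem blk_offdiag_norm_le (Q : H1 →L[ℂ] H0) (R : H0 →L[ℂ] H1) :
    ‖blk 0 Q R 0‖ ≤ max ‖Q‖ ‖R‖ := by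
  refine opNorm_le_bound _ ((norm_nonneg Q).trans (le_max_left _ _)) fun x => ?_
  have hQ : ‖Q x.snd‖ ≤ max ‖Q‖ ‖R‖ * ‖x.snd‖ :=
    (le_opNorm Q x.snd).trans (mul_le_mul_of_nonneg_right (le_max_left _ _) (norm_nonneg _))
  have hR : ‖R x.fst‖ ≤ max ‖Q‖ ‖R‖ * ‖x.fst‖ :=
    (le_opNorm R x.fst).trans (mul_le_mul_of_nonneg_right (le_max_right _ _) (norm_nonneg _))
  have h2 : ‖blk 0 Q R 0 x‖ ^ 2 ≤ (max ‖Q‖ ‖R‖ * ‖x‖) ^ 2 := by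
    rw [WithLp.prod_norm_sq_eq_of_L2]
    have hx : ‖x‖ ^ 2 = ‖x.fst‖ ^ 2 + ‖x.snd‖ ^ 2 := WithLp.prod_norm_sq_eq_of_L2 x
    simp only [blk_fst, blk_snd, zero_apply, zero_add, add_zero, mul_pow]
    rw [hx]
    nlinarith [norm_nonneg (Q x.snd), norm_nonneg (R x.fst), norm_nonneg x.fst, norm_nonneg x.snd]
  have hM : 0 ≤ max ‖Q‖ ‖R‖ * ‖x‖ := by positivity
  exact (pow_le_pow_iff_left₀ (norm_nonneg _) hM two_ne_zero).mp h2

theorem aux_nonneg (K : H0 →L[ℂ] H1) (h : ‖K‖ ≤ 1) :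
    (0 : H0 →L[ℂ] H0) ≤ 1 - adjoint K ∘L K := by
  rw [ContinuousLinearMap.nonneg_iff_isPositive]
  constructor
  · have h1 : IsSelfAdjoint (adjoint K ∘L K) := by
      have : star (adjoint K ∘L K) = adjoint K ∘L K := by
        rw [star_eq_adjoint, adjoint_comp, adjoint_adjoint]
      exact this
    exact ((IsSelfAdjoint.one _).sub h1).isSymmetric
  · intro x
    have hx : (1 - adjoint K ∘L K).reApplyInnerSelf x = ‖x‖ ^ 2 - ‖K x‖ ^ 2 := by
      rw [ContinuousLinearMap.reApplyInnerSelf_apply]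
      have : (1 - adjoint K ∘L K) x = x - adjoint K (K x) := rfl
      rw [this, inner_sub_left, adjoint_inner_left]
      simp only [map_sub, ← RCLike.re_to_complex, inner_self_eq_norm_sq]
    rw [hx]
    have h1 : ‖K x‖ ≤ ‖x‖ :=
      (le_opNorm K x).trans (mul_le_of_le_one_left (norm_nonneg x) h)
    have h2 : ‖K x‖ ^ 2 ≤ ‖x‖ ^ 2 := pow_le_pow_left₀ (norm_nonneg _) h1 2
    linarith

theorem sqrt_package {H : Type*} [NormedAddCommGroup H] [InnerProductSpace ℂ H] [CompleteSpace H]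
    (A : H →L[ℂ] H) (hA : ‖A‖ < 1) (hpos : (0 : H →L[ℂ] H) ≤ 1 - A) :
    ∃ s r : H →L[ℂ] H, s * s = 1 - A ∧ r * s = 1 ∧ s * r = 1 ∧
      IsSelfAdjoint s ∧ IsSelfAdjoint r := by
  set u : (H →L[ℂ] H)ˣ := Units.oneSub A hA with hu
  have huval : (↑u : H →L[ℂ] H) = 1 - A := rfl
  set s := CFC.sqrt (1 - A) with hs
  have hmul : s * s = 1 - A := CFC.sqrt_mul_sqrt_self _ hpos
  have hssa : IsSelfAdjoint s := IsSelfAdjoint.of_nonneg (CFC.sqrt_nonneg _)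
  have hc : Commute s ↑u := by
    rw [Commute, SemiconjBy, huval, ← hmul]
    exact (mul_assoc s s s).symm
  have hrs : (↑u⁻¹ * s) * s = 1 := by rw [mul_assoc, hmul, ← huval, u.inv_mul]
  have hsr : s * (↑u⁻¹ * s) = 1 := by
    have hc' := hc.units_inv_right
    calc s * (↑u⁻¹ * s) = (s * ↑u⁻¹) * s := (mul_assoc _ _ _).symm
      _ = (↑u⁻¹ * s) * s := by rw [hc'.eq]
      _ = 1 := hrs
  refine ⟨s, ↑u⁻¹ * s, hmul, hrs, hsr, hssa, ?_⟩
  have e1 : star ((↑u⁻¹ : H →L[ℂ] H) * s) * s = 1 := by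
    have h2 := congrArg star hsr
    rwa [star_mul, hssa.star_eq, star_one] at h2
  have e2 : star ((↑u⁻¹ : H →L[ℂ] H) * s) = ↑u⁻¹ * s := by
    calc star ((↑u⁻¹ : H →L[ℂ] H) * s)
        = star ((↑u⁻¹ : H →L[ℂ] H) * s) * (s * (↑u⁻¹ * s)) := by rw [hsr, mul_one]
      _ = (star ((↑u⁻¹ : H →L[ℂ] H) * s) * s) * (↑u⁻¹ * s) := (mul_assoc _ _ _).symm
      _ = ↑u⁻¹ * s := by rw [e1, one_mul]
  exact e2


end BlockThm

open BlockThm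

/-- Bounded-operator version of Theorem 5.2 (i) of the paper: let `A0`, `A1` be bounded
self-adjoint operators, `B : H1 → H0` bounded, and let `L` be the `J`-self-adjoint block
operator matrix `L(x0,x1) = (A0 x0 + B x1, -B* x0 + A1 x1)` on the Hilbert direct sum
`H = H0 ⊕ H1`. If the Riccati equation `K A0 - A1 K + K B K = -B*` has a strictly
contractive bounded solution `K` (`‖K‖ < 1`), then the spectrum of `L` is real and `L` is
similar to a bounded self-adjoint operator `Λ` which can be chosen block diagonal
(leaving `H0 ⊕ {0}` and `{0} ⊕ H1` invariant). -/
theorem J_selfAdjoint_block_similar_to_selfAdjoint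
    {H0 : Type*} [NormedAddCommGroup H0] [InnerProductSpace ℂ H0] [CompleteSpace H0]
    {H1 : Type*} [NormedAddCommGroup H1] [InnerProductSpace ℂ H1] [CompleteSpace H1]
    (A0 : H0 →L[ℂ] H0) (A1 : H1 →L[ℂ] H1) (B : H1 →L[ℂ] H0)
    (hA0 : IsSelfAdjoint A0) (hA1 : IsSelfAdjoint A1)
    (L : WithLp 2 (H0 × H1) →L[ℂ] WithLp 2 (H0 × H1))
    (hL : ∀ (x0 : H0) (x1 : H1),
      L ((WithLp.equiv 2 (H0 × H1)).symm (x0, x1)) =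
        (WithLp.equiv 2 (H0 × H1)).symm (A0 x0 + B x1, -(adjoint B) x0 + A1 x1))
    (K : H0 →L[ℂ] H1) (hKnorm : ‖K‖ < 1)
    (hK : K ∘L A0 - A1 ∘L K + (K ∘L B) ∘L K = -(adjoint B)) :
    (∀ z ∈ spectrum ℂ L, z.im = 0) ∧
    ∃ (T : WithLp 2 (H0 × H1) ≃L[ℂ] WithLp 2 (H0 × H1))
      (Λ : WithLp 2 (H0 × H1) →L[ℂ] WithLp 2 (H0 × H1)),
      IsSelfAdjoint Λ ∧
      (∀ x : WithLp 2 (H0 × H1), L x = T (Λ (T.symm x))) ∧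
      (∀ x0 : H0, ∃ y0 : H0,
        Λ ((WithLp.equiv 2 (H0 × H1)).symm (x0, 0)) =
          (WithLp.equiv 2 (H0 × H1)).symm (y0, 0)) ∧
      (∀ x1 : H1, ∃ y1 : H1,
        Λ ((WithLp.equiv 2 (H0 × H1)).symm (0, x1)) =
          (WithLp.equiv 2 (H0 × H1)).symm (0, y1)) := by
  have hadj : ‖adjoint K‖ = ‖K‖ := LinearIsometryEquiv.norm_map ContinuousLinearMap.adjoint K
  -- adjoint Riccati equation
  have hK' : A0 ∘L adjoint K - adjoint K ∘L A1 + adjoint K ∘L (adjoint B ∘L adjoint K) = -B := by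
    have h := congrArg (fun f => ContinuousLinearMap.adjoint f) hK
    simp only [map_sub, map_add, map_neg, adjoint_comp, adjoint_adjoint, comp_assoc,
      hA0.adjoint_eq, hA1.adjoint_eq] at h
    linear_combination (norm := abel1) h
  have hKK0 : ‖adjoint K ∘L K‖ < 1 := by
    have h := opNorm_comp_le (adjoint K) K
    rw [hadj] at h
    nlinarith [norm_nonneg K]
  have hKK1 : ‖K ∘L adjoint K‖ < 1 := by
    have h := opNorm_comp_le K (adjoint K)
    rw [hadj] at h
    nlinarith [norm_nonneg K]
  have hpos0 : (0 : H0 →L[ℂ] H0) ≤ 1 - adjoint K ∘L K := aux_nonneg K hKnorm.le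
  have hpos1 : (0 : H1 →L[ℂ] H1) ≤ 1 - K ∘L adjoint K := by
    have h := aux_nonneg (adjoint K) (by rw [hadj]; exact hKnorm.le)
    rwa [adjoint_adjoint] at h
  obtain ⟨s0, r0, hs0mul, hr0s0, hs0r0, hs0sa, hr0sa⟩ := sqrt_package _ hKK0 hpos0
  obtain ⟨s1, r1, hs1mul, hr1s1, hs1r1, hs1sa, hr1sa⟩ := sqrt_package _ hKK1 hpos1
  set Z0 : H0 →L[ℂ] H0 := A0 + B ∘L K with hZ0def
  set Z1 : H1 →L[ℂ] H1 := A1 - adjoint B ∘L adjoint K with hZ1def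
  have hZ0adj : adjoint Z0 = A0 + adjoint K ∘L adjoint B := by
    rw [hZ0def]; simp only [map_add, adjoint_comp, hA0.adjoint_eq]
  have hZ1adj : adjoint Z1 = A1 - K ∘L B := by
    rw [hZ1def]; simp only [map_sub, adjoint_comp, adjoint_adjoint, hA1.adjoint_eq]
  -- symmetry identities
  have hsym0 : adjoint Z0 ∘L (1 - adjoint K ∘L K) = (1 - adjoint K ∘L K) ∘L Z0 := by
    rw [hZ0adj, hZ0def]
    have e2 := congrArg (fun f => adjoint K ∘L f) hK
    have e3 := congrArg (fun f => f ∘L K) hK'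
    simp only [comp_add, add_comp, comp_sub, sub_comp, comp_neg, neg_comp, comp_assoc,
      one_def, id_comp, comp_id] at e2 e3 ⊢
    linear_combination (norm := abel1) e2 - e3
  have hsym1 : adjoint Z1 ∘L (1 - K ∘L adjoint K) = (1 - K ∘L adjoint K) ∘L Z1 := by
    rw [hZ1adj, hZ1def]
    have e4 := congrArg (fun f => K ∘L f) hK'
    have e5 := congrArg (fun f => f ∘L adjoint K) hK
    simp only [comp_add, add_comp, comp_sub, sub_comp, comp_neg, neg_comp, comp_assoc,
      one_def, id_comp, comp_id] at e4 e5 ⊢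
    linear_combination (norm := abel1) e5 - e4
  -- the diagonal blocks of Λ
  set Λ0 : H0 →L[ℂ] H0 := s0 * (Z0 * r0) with hΛ0def
  set Λ1 : H1 →L[ℂ] H1 := s1 * (Z1 * r1) with hΛ1def
  have hS0r0 : (1 - adjoint K ∘L K) * r0 = s0 := by rw [← hs0mul, mul_assoc, hs0r0, mul_one]
  have hS1r1 : (1 - K ∘L adjoint K) * r1 = s1 := by rw [← hs1mul, mul_assoc, hs1r1, mul_one]
  have hsym0' : adjoint Z0 * (1 - adjoint K ∘L K) = (1 - adjoint K ∘L K) * Z0 := hsym0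
  have hsym1' : adjoint Z1 * (1 - K ∘L adjoint K) = (1 - K ∘L adjoint K) * Z1 := hsym1
  have hΛ0sa : adjoint Λ0 = Λ0 := by
    have hstar : star Λ0 = r0 * (adjoint Z0 * s0) := by
      rw [hΛ0def, star_mul, star_mul, hr0sa.star_eq, hs0sa.star_eq, star_eq_adjoint, mul_assoc]
    rw [← star_eq_adjoint, hstar]
    calc r0 * (adjoint Z0 * s0)
        = r0 * (adjoint Z0 * ((1 - adjoint K ∘L K) * r0)) := by rw [hS0r0]
      _ = r0 * ((adjoint Z0 * (1 - adjoint K ∘L K)) * r0) := by rw [mul_assoc]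
      _ = r0 * (((1 - adjoint K ∘L K) * Z0) * r0) := by rw [hsym0']
      _ = r0 * (((s0 * s0) * Z0) * r0) := by rw [hs0mul]
      _ = (r0 * s0) * (s0 * (Z0 * r0)) := by simp only [mul_assoc]
      _ = Λ0 := by rw [hr0s0, one_mul, hΛ0def]
  have hΛ1sa : adjoint Λ1 = Λ1 := by
    have hstar : star Λ1 = r1 * (adjoint Z1 * s1) := by
      rw [hΛ1def, star_mul, star_mul, hr1sa.star_eq, hs1sa.star_eq, star_eq_adjoint, mul_assoc]
    rw [← star_eq_adjoint, hstar]
    calc r1 * (adjoint Z1 * s1)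
        = r1 * (adjoint Z1 * ((1 - K ∘L adjoint K) * r1)) := by rw [hS1r1]
      _ = r1 * ((adjoint Z1 * (1 - K ∘L adjoint K)) * r1) := by rw [mul_assoc]
      _ = r1 * (((1 - K ∘L adjoint K) * Z1) * r1) := by rw [hsym1']
      _ = r1 * (((s1 * s1) * Z1) * r1) := by rw [hs1mul]
      _ = (r1 * s1) * (s1 * (Z1 * r1)) := by simp only [mul_assoc]
      _ = Λ1 := by rw [hr1s1, one_mul, hΛ1def]
  have hΛsa : IsSelfAdjoint (blk Λ0 0 0 Λ1) := by
    rw [isSelfAdjoint_iff, star_eq_adjoint, blk_adjoint, hΛ0sa, hΛ1sa]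
    congr 1 <;> simp [map_zero]
  -- L as a block matrix
  have hLb : L = blk A0 B (-(adjoint B)) A1 := by
    ext x
    exact hL x.fst x.snd
  -- step 1 : L ∘ T' = T' ∘ diag(Z0, Z1)
  have e_b : A0 ∘L adjoint K + B = adjoint K ∘L Z1 := by
    rw [hZ1def]
    simp only [comp_sub, comp_assoc]
    linear_combination (norm := abel1) hK'
  have e_c : -(adjoint B) + A1 ∘L K = K ∘L Z0 := by
    have hKn := hK
    simp only [comp_assoc] at hKn
    rw [hZ0def]
    simp only [comp_add, comp_assoc]
    linear_combination (norm := abel1) -hKn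
  have step1 : blk A0 B (-(adjoint B)) A1 ∘L blk 1 (adjoint K) K 1 =
      blk 1 (adjoint K) K 1 ∘L blk Z0 0 0 Z1 := by
    rw [blk_comp, blk_comp]
    simp only [one_def, id_comp, comp_id, comp_zero, zero_comp, add_zero, zero_add, neg_comp]
    rw [← hZ0def, e_b, e_c, neg_add_eq_sub, ← hZ1def]
  -- step 2 : diag(Z0,Z1) ∘ diag(r0,r1) = diag(r0,r1) ∘ diag(Λ0,Λ1)
  have hZr0 : Z0 ∘L r0 = r0 ∘L Λ0 := by
    show Z0 * r0 = r0 * Λ0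
    rw [hΛ0def, ← mul_assoc, hr0s0, one_mul]
  have hZr1 : Z1 ∘L r1 = r1 ∘L Λ1 := by
    show Z1 * r1 = r1 * Λ1
    rw [hΛ1def, ← mul_assoc, hr1s1, one_mul]
  have step2 : blk Z0 0 0 Z1 ∘L blk r0 0 0 r1 = blk r0 0 0 r1 ∘L blk Λ0 0 0 Λ1 := by
    rw [blk_comp, blk_comp]
    simp only [comp_zero, zero_comp, add_zero, zero_add]
    rw [hZr0, hZr1]
  -- the units
  have hds : blk r0 0 0 r1 ∘L blk s0 0 0 s1 = 1 := by
    rw [blk_comp]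
    simp only [comp_zero, zero_comp, add_zero, zero_add]
    rw [show r0 ∘L s0 = 1 from hr0s0, show r1 ∘L s1 = 1 from hr1s1, blk_one]
  have hsd : blk s0 0 0 s1 ∘L blk r0 0 0 r1 = 1 := by
    rw [blk_comp]
    simp only [comp_zero, zero_comp, add_zero, zero_add]
    rw [show s0 ∘L r0 = 1 from hs0r0, show s1 ∘L r1 = 1 from hs1r1, blk_one]
  let d : (WithLp 2 (H0 × H1) →L[ℂ] WithLp 2 (H0 × H1))ˣ := ⟨blk r0 0 0 r1, blk s0 0 0 s1, hds, hsd⟩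
  have hNlt : ‖blk (0 : H0 →L[ℂ] H0) (-(adjoint K)) (-K) (0 : H1 →L[ℂ] H1)‖ < 1 := by
    refine lt_of_le_of_lt (blk_offdiag_norm_le _ _) ?_
    simpa [norm_neg, hadj] using hKnorm
  let u' := Units.oneSub _ hNlt
  have hu'val : (↑u' : WithLp 2 (H0 × H1) →L[ℂ] WithLp 2 (H0 × H1)) = blk 1 (adjoint K) K 1 := by
    show 1 - blk 0 (-(adjoint K)) (-K) 0 = _
    rw [one_sub_blk_offdiag, neg_neg, neg_neg]
  let u := u' * d
  have hdval : (↑d : WithLp 2 (H0 × H1) →L[ℂ] WithLp 2 (H0 × H1)) = blk r0 0 0 r1 := rfl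
  have key : L * ↑u = ↑u * blk Λ0 0 0 Λ1 := by
    have k1 : L * (↑u' : WithLp 2 (H0 × H1) →L[ℂ] WithLp 2 (H0 × H1)) =
        ↑u' * blk Z0 0 0 Z1 := by
      rw [hLb, hu'val]; exact step1
    have k2 : blk Z0 0 0 Z1 * (↑d : WithLp 2 (H0 × H1) →L[ℂ] WithLp 2 (H0 × H1)) =
        ↑d * blk Λ0 0 0 Λ1 := by
      rw [hdval]; exact step2
    rw [Units.val_mul, ← mul_assoc, k1, mul_assoc, k2, ← mul_assoc]
  have hLdecomp : L = ↑u * blk Λ0 0 0 Λ1 * ↑u⁻¹ := by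
    rw [Units.eq_mul_inv_iff_mul_eq]
    exact key
  constructor
  · intro z hz
    rw [hLdecomp, spectrum.units_conjugate] at hz
    exact hΛsa.im_eq_zero_of_mem_spectrum hz
  · refine ⟨ContinuousLinearEquiv.equivOfInverse (↑u) (↑u⁻¹)
      (fun x => by rw [← ContinuousLinearMap.mul_apply, u.inv_mul, ContinuousLinearMap.one_apply])
      (fun x => by rw [← ContinuousLinearMap.mul_apply, u.mul_inv, ContinuousLinearMap.one_apply]),
      blk Λ0 0 0 Λ1, hΛsa, ?_, ?_, ?_⟩
    · intro x
      conv_lhs => rw [hLdecomp]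
      simp only [ContinuousLinearMap.mul_apply]
      rfl
    · intro x0
      refine ⟨Λ0 x0, ?_⟩
      rw [WithLp.ext_iff]; apply Prod.ext <;>
        simp [blk_fst, blk_snd, WithLp.equiv_symm_apply, WithLp.toLp_fst, WithLp.toLp_snd, WithLp.ofLp_fst, WithLp.ofLp_snd]
    · intro x1
      refine ⟨Λ1 x1, ?_⟩
      rw [WithLp.ext_iff]; apply Prod.ext <;>
        simp [blk_fst, blk_snd, WithLp.equiv_symm_apply, WithLp.toLp_fst, WithLp.toLp_snd, WithLp.ofLp_fst, WithLp.ofLp_snd]
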